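/- arXiv:2104.14263 — 7 statements merged into one kernel-verified Lean document; each statement's English description precedes it below -/
import Mathlib

section
/- Let P be a poset, W a topological space, and {X_p | p ∈ P} a semi-trim P-partition of W with X = ⋃_{p∈P} X_p. Then for every p ∈ P, the intersection of the closure of X_p with X equals ⋃_{q ≤ p} X_q. -/
open Set

variable {P W : Type*} [PartialOrder P] [TopologicalSpace W]

/-- The type of a subset `Y` with respect to the family `X`. -/
def ptype (X : P → Set W) (Y : Set W) : Set P :=
  {p | (Y ∩ X p).Nonempty}

/-- `A` is a `p`-trim set: an open set whose type is exactly `{q | p ≤ q}`. -/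
def IsTrimSet (X : P → Set W) (p : P) (A : Set W) : Prop :=
  IsOpen A ∧ ptype X A = Ici p

/-- `P̂`: the set of labels `p` for which a `p`-trim set exists. -/
def trimHat (X : P → Set W) : Set P :=
  {p | ∃ A, IsTrimSet X p A}

/-- A `P`-partition: a pairwise disjoint family of nonempty subsets. -/
structure IsPPartition (X : P → Set W) : Prop where
  nonempty : ∀ p, (X p).Nonempty
  pairwise_disjoint : Pairwise fun p q => Disjoint (X p) (X q)

/-- A semi-trim `P`-partition. -/
structure IsSemiTrim (X : P → Set W) extends IsPPartition X : Prop where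
  nhds_base : ∀ w : W, ∀ U ∈ nhds w, ∃ p A, IsTrimSet X p A ∧ w ∈ A ∧ A ⊆ U
  trim_dense : ∀ A : Set W, IsOpen A → ∀ p ∈ ptype X A ∩ trimHat X,
    ∃ B ⊆ A, IsTrimSet X p B
  label_sup : ∀ p, ∀ x ∈ X p, IsLUB {q | ∃ A, IsTrimSet X q A ∧ x ∈ A} p
  full : ∀ p : P, ∀ w : W,
    (∀ U ∈ nhds w, ∃ A, IsTrimSet X p A ∧ w ∈ A ∧ A ⊆ U) → w ∈ X p

/-- For a semi-trim `P`-partition of `W`, the intersection of the closure of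
`X p` with `X = ⋃ q, X q` equals `⋃ q ≤ p, X q`. -/
theorem closure_inter_eq_biUnion_le (X : P → Set W) (h : IsSemiTrim X) (p : P) :
    closure (X p) ∩ (⋃ q, X q) = ⋃ q ≤ p, X q := by
  ext x
  simp only [mem_inter_iff, mem_iUnion, exists_prop]
  constructor
  · rintro ⟨hcl, q, hxq⟩
    refine ⟨q, ?_, hxq⟩
    have hlub := h.label_sup q x hxq
    refine hlub.2 ?_
    rintro r ⟨A, ⟨hAopen, hAtype⟩, hxA⟩
    have : (A ∩ X p).Nonempty := by
      rw [mem_closure_iff] at hcl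
      exact hcl A hAopen hxA
    have : p ∈ ptype X A := this
    rw [hAtype] at this
    exact this
  · rintro ⟨q, hqp, hxq⟩
    refine ⟨?_, q, hxq⟩
    rw [mem_closure_iff]
    intro O hO hxO
    obtain ⟨r, A, ⟨hAopen, hAtype⟩, hxA, hAO⟩ := h.nhds_base x O (hO.mem_nhds hxO)
    have hq : q ∈ ptype X A := ⟨x, hxA, hxq⟩
    rw [hAtype] at hq
    have hp : p ∈ ptype X A := by rw [hAtype]; exact le_trans hq hqp
    obtain ⟨y, hyA, hyp⟩ := hp
    exact ⟨y, hAO hyA, hyp⟩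
end

section
/- Let P be a poset satisfying the ascending chain condition and containing no infinite antichains, and let W be a topological space. Then every good P-partition of W is a complete trim P-partition of W. -/
open Set

variable {P W : Type*} [PartialOrder P] [TopologicalSpace W]

/-- If `P` satisfies the ACC and has no infinite antichains, then every good
`P`-partition of a topological space `W` is a complete trim `P`-partition: every point of the
(complete) partition is clean, and the partition is full. -/
theorem good_isCompleteTrim_of_acc_of_noInfiniteAntichain
    (hACC : ∀ f : ℕ → P, ¬ StrictMono f)
    (hAC : ∀ S : Set P, (S.Pairwise fun a b => ¬ a ≤ b ∧ ¬ b ≤ a) → S.Finite)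
    (X : P → Set W) (hpart : IsPPartition X)
    (hcomplete : (⋃ p, X p) = univ)
    (hgood : ∀ p, closure (X p) = ⋃ q ≤ p, X q) :
    (⋃ p, X p) = univ ∧
    (∀ p, ∀ x ∈ X p, ∃ A, IsTrimSet X p A ∧ x ∈ A) ∧
    (∀ p : P, ∀ w : W,
      (∀ U ∈ nhds w, ∃ A, IsTrimSet X p A ∧ w ∈ A ∧ A ⊆ U) → w ∈ X p) := by
  have hwf : WellFounded ((· > ·) : P → P → Prop) := by
    rw [RelEmbedding.wellFounded_iff_isEmpty]
    constructor
    intro f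
    exact hACC (fun n => f n) (fun a b h => f.map_rel_iff.2 h)
  have huniq : ∀ {q r : P} {x : W}, x ∈ X q → x ∈ X r → q = r := by
    intro q r x hq hr
    by_contra h
    exact Set.disjoint_left.mp (hpart.pairwise_disjoint h) hq hr
  have hmax : ∀ S : Set P, ∀ x ∈ S, ∃ m ∈ S, x ≤ m ∧ ∀ y ∈ S, m ≤ y → y = m := by
    intro S x hx
    obtain ⟨m, ⟨hmS, hxm⟩, hmin⟩ := hwf.has_min {y ∈ S | x ≤ y} ⟨x, hx, le_rfl⟩
    refine ⟨m, hmS, hxm, fun y hy hmy => ?_⟩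
    by_contra hne
    exact hmin y ⟨hy, hxm.trans hmy⟩ (lt_of_le_of_ne hmy (Ne.symm hne))
  have key : ∀ p : P, IsTrimSet X p (⋃ q ∈ Ici p, X q) := by
    intro p
    set S : Set P := {q | ¬ p ≤ q} with hS
    set M : Set P := {m | m ∈ S ∧ ∀ y ∈ S, m ≤ y → y = m} with hM
    have hMfin : M.Finite := by
      apply hAC
      intro a ha b hb hab
      constructor
      · intro h; exact hab (ha.2 b hb.1 h).symm
      · intro h; exact hab (hb.2 a ha.1 h)
    have hD : (⋃ q ∈ S, X q) = ⋃ m ∈ M, closure (X m) := by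
      apply Set.Subset.antisymm
      · rintro x hx
        rw [mem_iUnion₂] at hx
        obtain ⟨q, hqS, hxq⟩ := hx
        obtain ⟨m, hmS, hqm, hmaxm⟩ := hmax S q hqS
        rw [mem_iUnion₂]
        refine ⟨m, ⟨hmS, hmaxm⟩, ?_⟩
        rw [hgood m, mem_iUnion₂]
        exact ⟨q, hqm, hxq⟩
      · rintro x hx
        rw [mem_iUnion₂] at hx
        obtain ⟨m, hmM, hxm⟩ := hx
        rw [hgood m, mem_iUnion₂] at hxm
        obtain ⟨r, hrm, hxr⟩ := hxm
        rw [mem_iUnion₂]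
        refine ⟨r, fun hpr => hmM.1 (hpr.trans hrm), hxr⟩
    have hU : (⋃ q ∈ Ici p, X q) = (⋃ q ∈ S, X q)ᶜ := by
      ext x
      have hx : x ∈ ⋃ q, X q := hcomplete ▸ mem_univ x
      rw [mem_iUnion] at hx
      obtain ⟨r, hxr⟩ := hx
      simp only [mem_compl_iff, mem_iUnion₂]
      constructor
      · rintro ⟨q, hpq, hxq⟩ ⟨s, hs, hxs⟩
        exact hs (huniq hxs hxq ▸ hpq)
      · intro h
        refine ⟨r, ?_, hxr⟩
        by_contra hpr
        exact h ⟨r, hpr, hxr⟩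
    constructor
    · rw [hU, hD]
      exact (Set.Finite.isClosed_biUnion hMfin fun m _ => isClosed_closure).isOpen_compl
    · ext q
      simp only [ptype, mem_setOf_eq, mem_Ici]
      constructor
      · rintro ⟨x, hxU, hxq⟩
        rw [mem_iUnion₂] at hxU
        obtain ⟨s, hps, hxs⟩ := hxU
        exact huniq hxs hxq ▸ hps
      · intro hpq
        obtain ⟨x, hxq⟩ := hpart.nonempty q
        exact ⟨x, mem_iUnion₂.2 ⟨q, hpq, hxq⟩, hxq⟩
  have hclean : ∀ p, ∀ x ∈ X p, ∃ A, IsTrimSet X p A ∧ x ∈ A := by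
    intro p x hx
    exact ⟨_, key p, mem_iUnion₂.2 ⟨p, le_rfl, hx⟩⟩
  refine ⟨hcomplete, hclean, ?_⟩
  intro p w hw
  have hwmem : w ∈ ⋃ q, X q := hcomplete ▸ mem_univ w
  rw [mem_iUnion] at hwmem
  obtain ⟨r, hwr⟩ := hwmem
  -- r ≥ p
  obtain ⟨A, hA, hwA, _⟩ := hw univ Filter.univ_mem
  have hpr : p ≤ r := by
    have : r ∈ ptype X A := ⟨w, hwA, hwr⟩
    rwa [hA.2, mem_Ici] at this
  -- r ≤ p
  have hUr : w ∈ ⋃ q ∈ Ici r, X q := mem_iUnion₂.2 ⟨r, le_rfl, hwr⟩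
  obtain ⟨B, hB, hwB, hBsub⟩ := hw _ ((key r).1.mem_nhds hUr)
  have hrp : r ≤ p := by
    have hsub : ptype X B ⊆ ptype X (⋃ q ∈ Ici r, X q) := by
      rintro q ⟨y, hyB, hyq⟩
      exact ⟨y, hBsub hyB, hyq⟩
    rw [hB.2, (key r).2] at hsub
    exact hsub (mem_Ici.2 le_rfl)
  exact le_antisymm hpr hrp ▸ hwr
end

section
/- Let P be a poset satisfying the ascending chain condition and W a topological space. Then every semi-trim P-partition of W is a complete trim P-partition of W. -/
open Set

variable {P W : Type*} [PartialOrder P] [TopologicalSpace W]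

lemma acc_exists_maximal (hACC : ∀ f : ℕ → P, ¬ StrictMono f) (S : Set P) (hS : S.Nonempty) :
    ∃ p ∈ S, ∀ q ∈ S, p ≤ q → p = q := by
  have hwf : WellFounded ((· > ·) : P → P → Prop) := by
    rw [RelEmbedding.wellFounded_iff_isEmpty]
    constructor
    intro f
    exact hACC f fun a b hab => f.map_rel_iff.2 hab
  obtain ⟨p, hpS, hmin⟩ := hwf.has_min S hS
  refine ⟨p, hpS, fun q hq hpq => ?_⟩
  by_contra hne
  exact hmin q hq (lt_of_le_of_ne hpq hne)

lemma key (hACC : ∀ f : ℕ → P, ¬ StrictMono f) (X : P → Set W) (h : IsSemiTrim X) (w : W) :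
    ∃ p, w ∈ X p ∧ ∃ A, IsTrimSet X p A ∧ w ∈ A := by
  set S : Set P := {q | ∃ A, IsTrimSet X q A ∧ w ∈ A} with hSdef
  have hSne : S.Nonempty := by
    obtain ⟨p, A, hA, hwA, _⟩ := h.nhds_base w univ Filter.univ_mem
    exact ⟨p, A, hA, hwA⟩
  obtain ⟨p, ⟨A₀, hA₀, hwA₀⟩, hmax⟩ := acc_exists_maximal hACC S hSne
  have hkey : ∀ U ∈ nhds w, ∃ A, IsTrimSet X p A ∧ w ∈ A ∧ A ⊆ U := by
    intro U hU
    have hU' : U ∩ A₀ ∈ nhds w :=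
      Filter.inter_mem hU (hA₀.1.mem_nhds hwA₀)
    obtain ⟨r, C, hC, hwC, hCsub⟩ := h.nhds_base w _ hU'
    have hsub : ptype X C ⊆ ptype X A₀ := fun q ⟨x, hx1, hx2⟩ =>
      ⟨x, (hCsub hx1).2, hx2⟩
    rw [hC.2, hA₀.2] at hsub
    have hpr : p ≤ r := hsub (le_refl r)
    have : p = r := hmax r ⟨C, hC, hwC⟩ hpr
    subst this
    exact ⟨C, hC, hwC, fun x hx => (hCsub hx).1⟩
  exact ⟨p, h.full p w hkey, A₀, hA₀, hwA₀⟩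

/-- If `P` satisfies the ACC, then every semi-trim `P`-partition of a
topological space `W` is a complete trim `P`-partition: the partition covers `W` and every
point of the partition is clean. -/
theorem semiTrim_isCompleteTrim_of_acc
    (hACC : ∀ f : ℕ → P, ¬ StrictMono f)
    (X : P → Set W) (h : IsSemiTrim X) :
    (⋃ p, X p) = univ ∧
    (∀ p, ∀ x ∈ X p, ∃ A, IsTrimSet X p A ∧ x ∈ A) := by
  constructor
  · ext w
    simp only [mem_iUnion, mem_univ, iff_true]
    obtain ⟨p, hwp, -⟩ := key hACC X h w
    exact ⟨p, hwp⟩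
  · intro p x hx
    obtain ⟨q, hxq, A, hA, hxA⟩ := key hACC X h x
    have : p = q := by
      by_contra hne
      exact (h.pairwise_disjoint hne).le_bot ⟨hx, hxq⟩
    subst this
    exact ⟨A, hA, hxA⟩
end

section
/- Let P be a poset, W a T1 topological space, and {X_p | p ∈ P} a semi-trim P-partition of W. Then a point w ∈ W is an isolated point of W if and only if there is a maximal element p of P such that w ∈ X_p and w is an isolated point of the subspace X_p. -/
open Set

variable {P W : Type*} [PartialOrder P] [TopologicalSpace W]

/-- For a semi-trim `P`-partition of a T1 space `W`, a point `w` is isolated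
in `W` iff there is a maximal `p ∈ P` with `w ∈ X p` and `w` isolated in the subspace `X p`. -/
theorem isolated_iff_isolated_in_max [T1Space W]
    (X : P → Set W) (h : IsSemiTrim X) (w : W) :
    IsOpen ({w} : Set W) ↔
      ∃ p : P, IsMax p ∧ w ∈ X p ∧ ∃ U : Set W, IsOpen U ∧ U ∩ X p = {w} := by
  have uniq : ∀ p q : P, w ∈ X p → w ∈ X q → p = q := by
    intro p q hp hq
    by_contra hne
    exact (h.pairwise_disjoint hne).le_bot ⟨hp, hq⟩
  constructor
  · intro hw
    obtain ⟨p, A, ⟨hAo, hAt⟩, hwA, hAsub⟩ := h.nhds_base w {w} (hw.mem_nhds rfl)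
    have hA : A = {w} := subset_antisymm hAsub (by simpa using hwA)
    subst hA
    have hmem : ∀ q, w ∈ X q ↔ p ≤ q := by
      intro q
      constructor
      · intro hq
        have : q ∈ ptype X {w} := ⟨w, rfl, hq⟩
        rwa [hAt] at this
      · intro hq
        have hq' : q ∈ Ici p := hq
        rw [← hAt] at hq'
        obtain ⟨x, hx1, hx2⟩ := hq'
        rcases hx1 with rfl
        exact hx2
    have hwp : w ∈ X p := (hmem p).2 le_rfl
    refine ⟨p, ?_, hwp, {w}, hw, ?_⟩
    · intro q hpq
      have hwq : w ∈ X q := (hmem q).2 hpq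
      exact (uniq p q hwp hwq).ge
    · exact Set.inter_eq_left.mpr (singleton_subset_iff.2 hwp)
  · rintro ⟨p, hpmax, hwp, U, hUo, hUXp⟩
    have hwU : w ∈ U := by
      have : w ∈ U ∩ X p := by rw [hUXp]; rfl
      exact this.1
    have hnot : ∀ x ∈ U, x ∈ X p → x = w := by
      intro x hxU hxp
      have : x ∈ U ∩ X p := ⟨hxU, hxp⟩
      rwa [hUXp] at this
    obtain ⟨q, B, ⟨hBo, hBt⟩, hwB, hBsub⟩ := h.nhds_base w U (hUo.mem_nhds hwU)
    have hpB : p ∈ ptype X B := ⟨w, hwB, hwp⟩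
    have hqp : q ≤ p := by rw [hBt] at hpB; exact hpB
    -- First show q = p.
    have hq_eq : q = p := by
      have hqB : q ∈ ptype X B := by rw [hBt]; exact le_rfl
      obtain ⟨x, hxB, hxq⟩ := hqB
      by_cases hxw : x = w
      · subst hxw
        exact uniq q p hxq hwp
      · -- x ∈ B \ {w}, apply trim_dense to B \ {w}
        have hopen : IsOpen (B \ {w}) := hBo.sdiff isClosed_singleton
        obtain ⟨D, hDsub, hDo, hDt⟩ :=
          h.trim_dense (B \ {w}) hopen q ⟨⟨x, ⟨hxB, hxw⟩, hxq⟩, ⟨B, hBo, hBt⟩⟩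
        have hpD : p ∈ ptype X D := by rw [hDt]; exact hqp
        obtain ⟨y, hyD, hyp⟩ := hpD
        have hyBw : y ∈ B \ {w} := hDsub hyD
        exact absurd (hnot y (hBsub hyBw.1) hyp) hyBw.2
    rw [hq_eq] at hBt
    -- ptype B = Ici p = {p}
    have hIci : Ici p = {p} := by
      ext r
      simp only [mem_Ici, mem_singleton_iff]
      exact ⟨fun hr => le_antisymm (hpmax hr) hr, fun hr => hr.ge⟩
    -- Show B = {w}
    have hBw : B ⊆ {w} := by
      intro x hxB
      by_contra hxw
      have hxw' : x ∉ ({w} : Set W) := hxw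
      have hopen : IsOpen (B \ {w}) := hBo.sdiff isClosed_singleton
      obtain ⟨r, C, ⟨hCo, hCt⟩, hxC, hCsub⟩ :=
        h.nhds_base x (B \ {w}) (hopen.mem_nhds ⟨hxB, hxw'⟩)
      have hrC : r ∈ ptype X C := by rw [hCt]; exact le_rfl
      have hrB : r ∈ ptype X B := by
        obtain ⟨y, hyC, hyr⟩ := hrC
        exact ⟨y, (hCsub hyC).1, hyr⟩
      rw [hBt, hIci] at hrB
      rcases hrB with rfl
      have hpC : r ∈ ptype X C := by rw [hCt]; exact le_rfl
      obtain ⟨y, hyC, hyr⟩ := hpC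
      have hyBw : y ∈ B \ {w} := hCsub hyC
      exact absurd (hnot y (hBsub hyBw.1) hyr) hyBw.2
    have : B = {w} := subset_antisymm hBw (by simpa using hwB)
    rw [← this]
    exact hBo
end

section
/- Let P be a poset, W a topological space, and {X_p | p ∈ P} a semi-trim P-partition of W. Then: (i) if A ⊆ W is compact and either A is open or T(A) is a lower set, then there is a finite subset F ⊆ T(A) such that every element of T(A) lies above some element of F; (ii) if W is compact, then P has a finite foundation; (iii) if the closure of X_p is compact, then the singleton {p} has a finite foundation in P (i.e. p ∈ P_Δ). -/
open Set

variable {P W : Type*} [PartialOrder P] [TopologicalSpace W]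

/-- `F` is a finite foundation of `Q` in the poset `P`. -/
def IsFinFoundation (Q F : Set P) : Prop :=
  F.Finite ∧ (∀ q ∈ Q, ∀ r ≤ q, ∃ p ∈ F, p ≤ r) ∧ (∀ p ∈ F, ∃ q ∈ Q, p ≤ q)

/-- A trim set has a unique label. -/
lemma trim_label_unique {X : P → Set W} {q q' : P} {C : Set W}
    (h1 : IsTrimSet X q C) (h2 : IsTrimSet X q' C) : q = q' := by
  exact Ici_injective (h1.2.symm.trans h2.2)

/-- Auxiliary: cover a compact set by finitely many trim sets inside an open superset. -/
lemma exists_trim_subcover (X : P → Set W) (h : IsSemiTrim X) {A U : Set W}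
    (hA : IsCompact A) (hU : IsOpen U) (hAU : A ⊆ U) :
    ∃ 𝒞 : Set (Set W), 𝒞.Finite ∧
      (∀ C ∈ 𝒞, (∃ p, IsTrimSet X p C) ∧ C ⊆ U ∧ (C ∩ A).Nonempty) ∧ A ⊆ ⋃₀ 𝒞 := by
  have hchoice : ∀ x : A, ∃ p, ∃ B, IsTrimSet X p B ∧ (x : W) ∈ B ∧ B ⊆ U := fun x =>
    h.nhds_base x U (hU.mem_nhds (hAU x.2))
  choose lab B hB1 hB2 hB3 using hchoice
  obtain ⟨t, hcov⟩ := hA.elim_nhds_subcover' (fun x hx => B ⟨x, hx⟩)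
    (fun x hx => (hB1 ⟨x, hx⟩).1.mem_nhds (hB2 ⟨x, hx⟩))
  refine ⟨B '' ↑t, (t.finite_toSet.image B), ?_, ?_⟩
  · rintro C ⟨x, hx, rfl⟩
    exact ⟨⟨lab x, hB1 x⟩, hB3 x, ⟨x, hB2 x, x.2⟩⟩
  · intro y hy
    have hy' := hcov hy
    rw [mem_iUnion₂] at hy'
    obtain ⟨x, hx, hyB⟩ := hy'
    exact ⟨B x, ⟨x, hx, rfl⟩, hyB⟩

/-- Labels of finite families of trim sets form a finite set. -/
lemma finite_label_set {X : P → Set W} {𝒞 : Set (Set W)} (h𝒞 : 𝒞.Finite)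
    (F : Set P) (hF : ∀ q ∈ F, ∃ C ∈ 𝒞, IsTrimSet X q C) : F.Finite := by
  have hsub : F ⊆ ⋃ C ∈ 𝒞, {q | IsTrimSet X q C} := fun q hq => by
    obtain ⟨C, hC, hqC⟩ := hF q hq
    exact Set.mem_biUnion hC hqC
  have hfin : (⋃ C ∈ 𝒞, {q | IsTrimSet X q C}).Finite :=
    h𝒞.biUnion fun C _ =>
      Set.Subsingleton.finite fun a ha b hb => trim_label_unique ha hb
  exact hfin.subset hsub

/-- For a semi-trim `P`-partition of `W`:
(i) if `A` is compact and is open or has lower-set type, then some finite `F ⊆ T(A)` lies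
below all of `T(A)`; (ii) if `W` is compact then `P` has a finite foundation; (iii) if
`closure (X p)` is compact then `{p}` has a finite foundation (`p ∈ P_Δ`). -/
theorem compactness_of_semiTrim (X : P → Set W) (h : IsSemiTrim X) :
    (∀ A : Set W, IsCompact A → (IsOpen A ∨ IsLowerSet (ptype X A)) →
      ∃ F : Set P, F.Finite ∧ F ⊆ ptype X A ∧ ∀ q ∈ ptype X A, ∃ p ∈ F, p ≤ q) ∧
    (CompactSpace W → ∃ F : Set P, IsFinFoundation univ F) ∧
    (∀ p : P, IsCompact (closure (X p)) → ∃ F : Set P, IsFinFoundation {p} F) := by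
  have lab_le : ∀ (q : P) (B : Set W) (pB : P), IsTrimSet X pB B → (B ∩ X q).Nonempty →
      pB ≤ q := by
    intro q B pB hB hne
    have : q ∈ ptype X B := hne
    rw [hB.2] at this
    exact this
  have part1 : ∀ A : Set W, IsCompact A → (IsOpen A ∨ IsLowerSet (ptype X A)) →
      ∃ F : Set P, F.Finite ∧ F ⊆ ptype X A ∧ ∀ q ∈ ptype X A, ∃ p ∈ F, p ≤ q := by
    intro A hA hcase
    obtain ⟨U, hUopen, hAU, hside⟩ :
        ∃ U, IsOpen U ∧ A ⊆ U ∧ (U = A ∨ IsLowerSet (ptype X A)) := by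
      rcases hcase with h' | h'
      exacts [⟨A, h', subset_rfl, Or.inl rfl⟩,
        ⟨univ, isOpen_univ, subset_univ _, Or.inr h'⟩]
    obtain ⟨𝒞, h𝒞fin, h𝒞, hcov⟩ := exists_trim_subcover X h hA hUopen hAU
    refine ⟨{q ∈ ptype X A | ∃ C ∈ 𝒞, IsTrimSet X q C}, ?_, fun q hq => hq.1, ?_⟩
    · exact finite_label_set h𝒞fin _ (fun q hq => hq.2)
    · rintro q ⟨y, hyA, hyq⟩
      obtain ⟨C, hC, hyC⟩ := hcov hyA
      obtain ⟨⟨pC, hpC⟩, hCU, -⟩ := h𝒞 C hC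
      have hle : pC ≤ q := lab_le q C pC hpC ⟨y, hyC, hyq⟩
      have hmem : pC ∈ ptype X A := by
        rcases hside with rfl | hlower
        · have : pC ∈ ptype X C := by rw [hpC.2]; exact self_mem_Ici
          obtain ⟨z, hz1, hz2⟩ := this
          exact ⟨z, hCU hz1, hz2⟩
        · exact hlower hle ⟨y, hyA, hyq⟩
      exact ⟨pC, ⟨hmem, C, hC, hpC⟩, hle⟩
  refine ⟨part1, ?_, ?_⟩
  · intro hW
    have huniv : ptype X univ = univ := by
      ext p
      simpa [ptype] using (h.nonempty p).mono (by simp)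
    obtain ⟨F, hF1, hF2, hF3⟩ := part1 univ isCompact_univ (Or.inl isOpen_univ)
    refine ⟨F, hF1, fun q _ r hr => ?_, fun p hp => ⟨p, mem_univ p, le_rfl⟩⟩
    exact hF3 r (huniv ▸ mem_univ r)
  · intro p hC
    obtain ⟨𝒞, h𝒞fin, h𝒞, hcov⟩ :=
      exists_trim_subcover X h hC isOpen_univ (subset_univ _)
    -- X r ⊆ closure (X p) when r ≤ p
    have hsub : ∀ r ≤ p, X r ⊆ closure (X p) := by
      intro r hrp z hz
      rw [mem_closure_iff]
      intro O hO hzO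
      obtain ⟨q', B', hB', hzB', hB'O⟩ := h.nhds_base z O (hO.mem_nhds hzO)
      have hq'r : q' ≤ r := lab_le r B' q' hB' ⟨z, hzB', hz⟩
      have : p ∈ ptype X B' := by rw [hB'.2]; exact hq'r.trans hrp
      obtain ⟨w, hw1, hw2⟩ := this
      exact ⟨w, hB'O hw1, hw2⟩
    refine ⟨{q | ∃ C ∈ 𝒞, IsTrimSet X q C}, ⟨?_, ?_, ?_⟩⟩
    · exact finite_label_set h𝒞fin _ (fun q hq => hq)
    · rintro q rfl r hrq
      obtain ⟨z, hz⟩ := h.nonempty r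
      obtain ⟨C, hCmem, hzC⟩ := hcov (hsub r hrq hz)
      obtain ⟨⟨pC, hpC⟩, -, -⟩ := h𝒞 C hCmem
      exact ⟨pC, ⟨C, hCmem, hpC⟩, lab_le r C pC hpC ⟨z, hzC, hz⟩⟩
    · rintro f ⟨C, hCmem, hfC⟩
      obtain ⟨-, -, y, hyC, hyc⟩ := h𝒞 C hCmem
      have : (C ∩ X p).Nonempty := mem_closure_iff.mp hyc C hfC.1 hyC
      exact ⟨p, rfl, lab_le p C f hfC this⟩
end

section
/- Let P be a poset, W a topological space admitting a good P-partition {X_p | p ∈ P}, and A a compact closed subset of W. Then every descending sequence p_1 ≥ p_2 ≥ p_3 ≥ ⋯ of elements of T(A) has a lower bound in T(A): there exists q ∈ T(A) with q ≤ p_i for all i. -/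
open Set

variable {P W : Type*} [PartialOrder P] [TopologicalSpace W]

/-- If `W` admits a good `P`-partition and `A ⊆ W` is compact and closed,
then every descending sequence in `T(A)` has a lower bound in `T(A)`. -/
theorem descending_chain_lowerBound_of_good
    (X : P → Set W) (hpart : IsPPartition X) (hcomplete : (⋃ p, X p) = univ)
    (hgood : ∀ p, closure (X p) = ⋃ q ≤ p, X q)
    (A : Set W) (hAcpt : IsCompact A) (hAcl : IsClosed A)
    (p : ℕ → P) (hp : Antitone p) (hpT : ∀ i, p i ∈ ptype X A) :
    ∃ q ∈ ptype X A, ∀ i, q ≤ p i := by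
  -- closures are monotone along the chain
  have hmono : ∀ {m n : ℕ}, n ≤ m → closure (X (p m)) ⊆ closure (X (p n)) := by
    intro m n hnm
    rw [hgood, hgood]
    intro w hw
    simp only [mem_iUnion] at hw ⊢
    obtain ⟨q, hq, hwq⟩ := hw
    exact ⟨q, hq.trans (hp hnm), hwq⟩
  -- the intersection A ∩ ⋂ n, closure (X (p n)) is nonempty
  have key : (A ∩ ⋂ n, closure (X (p n))).Nonempty := by
    apply hAcpt.inter_iInter_nonempty _ (fun n => isClosed_closure)
    intro u
    rcases u.eq_empty_or_nonempty with rfl | hu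
    · simpa using (Set.Nonempty.mono inter_subset_left (hpT 0) : A.Nonempty)
    · obtain ⟨N, hN, hNmax⟩ := u.exists_max_image id hu
      obtain ⟨x, hxA, hxX⟩ := hpT N
      refine ⟨x, hxA, ?_⟩
      simp only [mem_iInter]
      intro i hi
      exact hmono (hNmax i hi) (subset_closure hxX)
  obtain ⟨w, hwA, hwI⟩ := key
  simp only [mem_iInter] at hwI
  -- w lies in some X q
  have : w ∈ ⋃ q, X q := by rw [hcomplete]; trivial
  obtain ⟨q, hq⟩ := mem_iUnion.mp this
  refine ⟨q, ⟨w, hwA, hq⟩, fun i => ?_⟩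
  have := hwI i
  rw [hgood] at this
  simp only [mem_iUnion] at this
  obtain ⟨q', hq', hwq'⟩ := this
  rcases eq_or_ne q' q with rfl | hne
  · exact hq'
  · exact absurd rfl ((hpart.pairwise_disjoint hne).ne_of_mem hwq' hq)
end

section
/- There is a partition {X_r | r ∈ [0,1]} of the Cantor set W (the family being pairwise disjoint, nonempty, with union W) such that for every r ∈ [0,1] the closure of X_r equals ⋃_{s ≤ r} X_s, and moreover X_0 is homeomorphic to the Cantor set. -/
open Set

/-- The values: zero on even indices; on odd index `2 * Nat.pair a b + 1` the
rational `(a+1)/(a+b+2)`. -/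
noncomputable def qq (n : ℕ) : ℝ :=
  if n % 2 = 0 then 0
  else (((n / 2).unpair.1 : ℝ) + 1) / (((n / 2).unpair.1 : ℝ) + ((n / 2).unpair.2 : ℝ) + 2)

lemma qq_nonneg (n : ℕ) : 0 ≤ qq n := by
  unfold qq; split
  · exact le_refl 0
  · positivity

lemma qq_le_one (n : ℕ) : qq n ≤ 1 := by
  unfold qq; split
  · norm_num
  · rw [div_le_one (by positivity)]
    have : (0:ℝ) ≤ ((n / 2).unpair.2 : ℝ) := Nat.cast_nonneg _
    linarith

lemma qq_even {n : ℕ} (h : n % 2 = 0) : qq n = 0 := by unfold qq; simp [h]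

lemma qq_pos_of_odd {n : ℕ} (h : n % 2 ≠ 0) : 0 < qq n := by
  unfold qq; rw [if_neg h]; positivity

lemma qq_pair (a b : ℕ) :
    qq (2 * Nat.pair a b + 1) = ((a : ℝ) + 1) / ((a : ℝ) + (b : ℝ) + 2) := by
  have h1 : (2 * Nat.pair a b + 1) % 2 = 1 := by omega
  have h2 : (2 * Nat.pair a b + 1) / 2 = Nat.pair a b := by omega
  unfold qq
  rw [if_neg (by omega), h2, Nat.unpair_pair]

/-- Density: values of `qq` at arbitrarily large indices fill `(r - ε, r]` for any `r ∈ [0,1]`. -/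
lemma qq_dense {r ε : ℝ} (hr0 : 0 ≤ r) (hr1 : r ≤ 1) (hε : 0 < ε) (N : ℕ) :
    ∃ n, N ≤ n ∧ r - ε < qq n ∧ qq n ≤ r := by
  rcases eq_or_lt_of_le hr0 with h0 | h0
  · exact ⟨2 * N, by omega, by rw [qq_even (by omega)]; constructor <;> linarith⟩
  · set u := max (r - ε) 0 with hu
    have hu0 : 0 ≤ u := le_max_right _ _
    have hur : u < r := max_lt (by linarith) h0
    obtain ⟨m, hm⟩ := exists_nat_gt (2 / (r - u))
    have hmr : 0 < 2 / (r - u) := div_pos two_pos (by linarith)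
    have hm0 : 0 < (m : ℝ) := lt_trans hmr hm
    have h2m : 2 / (m : ℝ) < r - u := by
      rw [div_lt_iff₀ hm0]
      have h2 : 2 < (r - u) * m := by
        rw [div_lt_iff₀ (by linarith : (0:ℝ) < r - u)] at hm
        linarith
      linarith
    set p : ℕ := (⌊u * m⌋).toNat + 1 with hp
    have hfl : (0:ℤ) ≤ ⌊u * m⌋ := Int.floor_nonneg.mpr (by positivity)
    have hcast : ((⌊u * (m:ℝ)⌋.toNat : ℕ) : ℝ) = ((⌊u * (m:ℝ)⌋ : ℤ) : ℝ) := by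
      exact_mod_cast congrArg (fun z : ℤ => (z : ℝ)) (Int.toNat_of_nonneg hfl)
    have hp1 : u * m < (p : ℝ) := by
      have := Int.lt_floor_add_one (u * m)
      rw [hp]; push_cast; rw [hcast]; linarith
    have hp2 : (p : ℝ) ≤ u * m + 1 := by
      have := Int.floor_le (u * m)
      rw [hp]; push_cast; rw [hcast]; linarith
    have hval1 : u < (p : ℝ) / m := by rw [lt_div_iff₀ hm0]; linarith
    have hval2 : (p : ℝ) / m < r := by
      rw [div_lt_iff₀ hm0]
      have : u * m + 2 < r * m := by
        rw [div_lt_iff₀ hm0] at h2m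
        nlinarith
      linarith
    have hpm : p < m := by
      have : (p : ℝ) < (m : ℝ) := by
        have := hval2.trans_le hr1
        rw [div_lt_one hm0] at this
        exact this
      exact_mod_cast this
    set k : ℕ := N + 1 with hk
    have hkp : 1 ≤ k * p := Nat.one_le_iff_ne_zero.mpr (by positivity)
    have hkm : k * p + k ≤ k * m := by
      have h1 := Nat.mul_le_mul_left k (show p + 1 ≤ m by omega)
      have h2 : k * (p + 1) = k * p + k := by ring
      omega
    refine ⟨2 * Nat.pair (k * p - 1) (k * m - k * p - 1) + 1, ?_, ?_⟩
    · have := Nat.right_le_pair (k * p - 1) (k * m - k * p - 1)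
      omega
    · rw [qq_pair]
      have e1 : ((k * p - 1 : ℕ) : ℝ) + 1 = (k : ℝ) * p := by
        rw [Nat.cast_sub hkp]; push_cast; ring
      have e2 : ((k * p - 1 : ℕ) : ℝ) + ((k * m - k * p - 1 : ℕ) : ℝ) + 2 = (k : ℝ) * m := by
        rw [Nat.cast_sub hkp, Nat.cast_sub (show 1 ≤ k * m - k * p by omega),
          Nat.cast_sub (show k * p ≤ k * m by omega)]
        push_cast; ring
      rw [e1, e2]
      have hk0 : (k : ℝ) ≠ 0 := by positivity
      rw [mul_div_mul_left _ _ hk0]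
      constructor
      · calc r - ε ≤ u := le_max_left _ _
          _ < (p : ℝ) / m := hval1
      · exact le_of_lt hval2

noncomputable def gg (x : ℕ → Bool) : ℝ :=
  sSup (insert 0 (qq '' {n | x n = true}))

lemma gg_set_nonempty (x : ℕ → Bool) : (insert 0 (qq '' {n | x n = true})).Nonempty :=
  ⟨0, mem_insert _ _⟩

lemma gg_set_bdd (x : ℕ → Bool) : BddAbove (insert 0 (qq '' {n | x n = true})) := by
  refine ⟨1, ?_⟩
  rintro y (rfl | ⟨n, _, rfl⟩)
  · norm_num
  · exact qq_le_one n

lemma gg_nonneg (x : ℕ → Bool) : 0 ≤ gg x :=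
  le_csSup (gg_set_bdd x) (mem_insert _ _)

lemma gg_le {x : ℕ → Bool} {c : ℝ} (hc : 0 ≤ c) (h : ∀ n, x n = true → qq n ≤ c) :
    gg x ≤ c := by
  refine csSup_le (gg_set_nonempty x) ?_
  rintro y (rfl | ⟨n, hn, rfl⟩)
  · exact hc
  · exact h n hn

lemma gg_le_one (x : ℕ → Bool) : gg x ≤ 1 := gg_le zero_le_one fun n _ => qq_le_one n

lemma le_gg {x : ℕ → Bool} {n : ℕ} (h : x n = true) : qq n ≤ gg x :=
  le_csSup (gg_set_bdd x) (mem_insert_of_mem _ ⟨n, h, rfl⟩)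

/-- Modifying `x` beyond position `N` to take all indices with value `≤ r` gives `gg = r`. -/
lemma gg_modify {x : ℕ → Bool} {r : ℝ} (hr0 : 0 ≤ r) (hr1 : r ≤ 1) (hx : gg x ≤ r) (N : ℕ) :
    gg (fun n => if n < N then x n else decide (qq n ≤ r)) = r := by
  set y : ℕ → Bool := fun n => if n < N then x n else decide (qq n ≤ r) with hy
  have h1 : gg y ≤ r := by
    refine gg_le hr0 fun n hn => ?_
    have hn' : (if n < N then x n else decide (qq n ≤ r)) = true := hn
    by_cases h : n < N
    · rw [if_pos h] at hn'
      exact (le_gg hn').trans hx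
    · rw [if_neg h] at hn'
      exact of_decide_eq_true hn'
  have h2 : r ≤ gg y := by
    refine le_of_forall_sub_le fun ε hε => ?_
    obtain ⟨n, hnN, hn1, hn2⟩ := qq_dense hr0 hr1 hε N
    have hyn : y n = true := by
      rw [hy]; simp only [if_neg (by omega : ¬ n < N)]
      exact decide_eq_true hn2
    have := le_gg hyn
    linarith
  linarith

lemma isClosed_gg_le {r : ℝ} (hr : 0 ≤ r) : IsClosed {x : ℕ → Bool | gg x ≤ r} := by
  rw [← isOpen_compl_iff]
  rw [isOpen_iff_mem_nhds]
  intro x hx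
  simp only [mem_compl_iff, mem_setOf_eq, not_le] at hx
  obtain ⟨y, hy, hry⟩ := exists_lt_of_lt_csSup (gg_set_nonempty x) hx
  rcases hy with rfl | ⟨n, hn, rfl⟩
  · linarith
  · refine Filter.mem_of_superset (IsOpen.mem_nhds ?_ (show x ∈ {z : ℕ → Bool | z n = true} from hn)) ?_
    · have hc : Continuous (fun z : ℕ → Bool => z n) := continuous_apply n
      exact (isOpen_discrete ({true} : Set Bool)).preimage hc
    · intro z hz
      simp only [mem_compl_iff, mem_setOf_eq, not_le]
      exact lt_of_lt_of_le hry (le_gg hz)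

lemma gg_false : gg (fun _ => false) = 0 :=
  le_antisymm (gg_le le_rfl fun n h => by simp at h) (gg_nonneg _)

/-- Characterization of the fiber over `0`. -/
lemma gg_eq_zero_iff (x : ℕ → Bool) : gg x = 0 ↔ ∀ n, x n = true → n % 2 = 0 := by
  constructor
  · intro h n hn
    by_contra hodd
    have h1 := le_gg hn
    have h2 := qq_pos_of_odd hodd
    rw [h] at h1; linarith
  · intro h
    refine le_antisymm (gg_le le_rfl fun n hn => ?_) (gg_nonneg x)
    rw [qq_even (h n hn)]

/-- There is a partition `{X r | r ∈ [0,1]}` of the Cantor set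
(realised as `ℕ → Bool` with the product topology) such that
`closure (X r) = ⋃_{s ≤ r} X s` for every `r ∈ [0,1]`, and `X 0` is homeomorphic to the
Cantor set. -/
theorem cantor_partition_indexed_by_unitInterval :
    ∃ X : Icc (0 : ℝ) 1 → Set (ℕ → Bool),
      (∀ r, (X r).Nonempty) ∧
      (Pairwise fun r s => Disjoint (X r) (X s)) ∧
      (⋃ r, X r) = univ ∧
      (∀ r, closure (X r) = ⋃ s ≤ r, X s) ∧
      Nonempty (↥(X ⟨0, by norm_num⟩) ≃ₜ (ℕ → Bool)) := by
  refine ⟨fun r => {x | gg x = (r : ℝ)}, ?_, ?_, ?_, ?_, ?_⟩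
  · -- nonempty
    rintro ⟨r, hr0, hr1⟩
    exact ⟨_, gg_modify hr0 hr1 (gg_false ▸ hr0) 0⟩
  · -- pairwise disjoint
    intro r s hrs
    rw [Set.disjoint_left]
    rintro x (hx1 : gg x = (r : ℝ)) (hx2 : gg x = (s : ℝ))
    exact hrs (Subtype.ext (hx1 ▸ hx2))
  · -- union
    refine eq_univ_of_forall fun x => ?_
    exact mem_iUnion.mpr ⟨⟨gg x, gg_nonneg x, gg_le_one x⟩, rfl⟩
  · -- closures
    rintro ⟨r, hr0, hr1⟩
    have hU : (⋃ s ≤ (⟨r, hr0, hr1⟩ : Icc (0:ℝ) 1), {x : ℕ → Bool | gg x = (s : ℝ)})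
        = {x : ℕ → Bool | gg x ≤ r} := by
      ext x
      simp only [mem_iUnion, mem_setOf_eq, exists_prop]
      constructor
      · rintro ⟨s, hsr, hx⟩
        exact hx ▸ (Subtype.coe_le_coe.mpr hsr)
      · intro hx
        exact ⟨⟨gg x, gg_nonneg x, gg_le_one x⟩, Subtype.mk_le_mk.mpr hx, rfl⟩
    rw [hU]
    refine Subset.antisymm (closure_minimal (fun x hx => le_of_eq hx) (isClosed_gg_le hr0)) ?_
    intro x (hx : gg x ≤ r)
    have hmem : ∀ N : ℕ, (fun n => if n < N then x n else decide (qq n ≤ r)) ∈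
        {z : ℕ → Bool | gg z = r} := fun N => gg_modify hr0 hr1 hx N
    have ht : Filter.Tendsto (fun N : ℕ => fun n => if n < N then x n else decide (qq n ≤ r))
        Filter.atTop (nhds x) := by
      rw [tendsto_pi_nhds]
      intro n
      refine Filter.Tendsto.congr' ?_ (tendsto_const_nhds (x := x n) (f := (Filter.atTop : Filter ℕ)))
      rw [Filter.EventuallyEq, Filter.eventually_atTop]
      exact ⟨n + 1, fun N hN => (if_pos (by omega)).symm⟩
    exact mem_closure_of_tendsto ht (Filter.Eventually.of_forall hmem)
  · -- X 0 homeomorphic to Cantor set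
    refine ⟨{
      toFun := fun x k => x.1 (2 * k)
      invFun := fun y => ⟨fun n => if n % 2 = 0 then y (n / 2) else false, ?_⟩
      left_inv := ?_
      right_inv := ?_
      continuous_toFun := ?_
      continuous_invFun := ?_ }⟩
    · show gg _ = ((0:ℝ))
      rw [gg_eq_zero_iff]
      intro n hn
      by_contra hodd
      rw [if_neg hodd] at hn
      exact Bool.false_ne_true hn
    · rintro ⟨x, hx⟩
      refine Subtype.ext (funext fun n => ?_)
      by_cases h : n % 2 = 0
      · simp only [if_pos h]
        congr 1
        omega
      · simp only [if_neg h]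
        have hx' : gg x = 0 := hx
        rw [gg_eq_zero_iff] at hx'
        replace hx := hx'
        cases hxn : x n with
        | false => rfl
        | true => exact absurd (hx n hxn) h
    · intro y
      funext k
      simp only [Nat.mul_mod_right]
      rw [if_pos trivial]
      congr 1
      omega
    · exact continuous_pi fun k => (continuous_apply (2 * k)).comp continuous_subtype_val
    · refine Continuous.subtype_mk (continuous_pi fun n => ?_) _
      by_cases h : n % 2 = 0
      · simp only [if_pos h]
        exact continuous_apply (n / 2)
      · simp only [if_neg h]
        exact continuous_const
end
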